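/- Let α > 0 and let y₁, y₂ be convex Lipschitz functions on [0, α]; set h := y₁ − y₂ and ψ(x) := (x, h(x)) for x ∈ [0, α]. Then the left derivative ψ'₋(x) exists for every x ∈ (0, α], the map x ↦ ψ'₋(x) is left-continuous on (0, α], and ‖ψ'₋(x)‖ ≥ 1 for every x ∈ (0, α]; consequently the curve ψ has a left half-tangent at every point of (0, α], i.e., lim_{t→0+} (ψ(x) − ψ(x − t))/‖ψ(x) − ψ(x − t)‖ exists for every x ∈ (0, α]. -/

import Mathlib

open Set Filter Topology

noncomputable section

/-- The point `(a, b)` of `ℝ²`. -/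
def mk2 (a b : ℝ) : EuclideanSpace ℝ (Fin 2) :=
  (WithLp.equiv 2 (Fin 2 → ℝ)).symm ![a, b]


lemma mk2_sub (a b c d : ℝ) : mk2 a b - mk2 c d = mk2 (a - c) (b - d) := by
  unfold mk2
  ext i
  fin_cases i <;> simp [WithLp.equiv_symm_apply]

lemma mk2_smul (r a b : ℝ) : r • mk2 a b = mk2 (r * a) (r * b) := by
  unfold mk2
  ext i
  fin_cases i <;> simp [WithLp.equiv_symm_apply]

lemma norm_mk2 (a b : ℝ) : ‖mk2 a b‖ = Real.sqrt (a ^ 2 + b ^ 2) := by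
  rw [EuclideanSpace.norm_eq]
  congr 1
  rw [Fin.sum_univ_two]
  unfold mk2
  simp [WithLp.equiv_symm_apply, Real.norm_eq_abs, sq_abs]

lemma continuous_mk2_one : Continuous fun b : ℝ => mk2 1 b := by
  have : Isometry fun b : ℝ => mk2 1 b := by
    apply Isometry.of_dist_eq
    intro b c
    rw [dist_eq_norm, dist_eq_norm, mk2_sub, norm_mk2]
    simp [Real.sqrt_sq_eq_abs, Real.norm_eq_abs]
  exact this.continuous


/-- Left-derivative candidate of `f` at `x`: sup of left slopes. -/
def ldv (f : ℝ → ℝ) (x : ℝ) : ℝ :=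
  sSup ((fun y => (f x - f y) / (x - y)) '' Ico 0 x)

variable {α : ℝ} {f : ℝ → ℝ} {L : NNReal} {x x₁ x₂ y : ℝ}

lemma sl_le (hlip : LipschitzOnWith L f (Icc 0 α)) (hx : x ∈ Ioc 0 α) (hy : y ∈ Ico 0 x) :
    (f x - f y) / (x - y) ≤ L := by
  have hyx : y < x := hy.2
  have hxm : x ∈ Icc (0:ℝ) α := ⟨hx.1.le, hx.2⟩
  have hym : y ∈ Icc (0:ℝ) α := ⟨hy.1, hy.2.le.trans hx.2⟩
  have := hlip.dist_le_mul x hxm y hym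
  rw [Real.dist_eq, Real.dist_eq] at this
  have h1 : f x - f y ≤ L * (x - y) := by
    calc f x - f y ≤ |f x - f y| := le_abs_self _
      _ ≤ L * |x - y| := this
      _ = L * (x - y) := by rw [abs_of_pos (by linarith)]
  rw [div_le_iff₀ (by linarith)]
  exact h1

lemma neg_le_sl (hlip : LipschitzOnWith L f (Icc 0 α)) (hx : x ∈ Ioc 0 α) (hy : y ∈ Ico 0 x) :
    -(L : ℝ) ≤ (f x - f y) / (x - y) := by
  have hyx : y < x := hy.2
  have hxm : x ∈ Icc (0:ℝ) α := ⟨hx.1.le, hx.2⟩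
  have hym : y ∈ Icc (0:ℝ) α := ⟨hy.1, hy.2.le.trans hx.2⟩
  have := hlip.dist_le_mul x hxm y hym
  rw [Real.dist_eq, Real.dist_eq] at this
  have h1 : -(L * (x - y)) ≤ f x - f y := by
    have h2 : |f x - f y| ≤ L * (x - y) := by
      calc |f x - f y| ≤ L * |x - y| := this
        _ = L * (x - y) := by rw [abs_of_pos (by linarith)]
    linarith [(abs_le.mp h2).1]
  rw [le_div_iff₀ (by linarith)]
  linarith

lemma bdd_sl (hlip : LipschitzOnWith L f (Icc 0 α)) (hx : x ∈ Ioc 0 α) :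
    BddAbove ((fun y => (f x - f y) / (x - y)) '' Ico 0 x) :=
  ⟨L, by rintro _ ⟨y, hy, rfl⟩; exact sl_le hlip hx hy⟩

lemma sl_mono (hconv : ConvexOn ℝ (Icc 0 α) f) (hx : x ∈ Ioc 0 α) :
    MonotoneOn (fun y => (f x - f y) / (x - y)) (Ico 0 x) := by
  have key : ∀ c : ℝ, (f c - f x) / (c - x) = (f x - f c) / (x - c) := fun c => by
    rw [← neg_div_neg_eq, neg_sub, neg_sub]
  intro a ha b hb hab
  have h1 : (f a - f x) / (a - x) ≤ (f b - f x) / (b - x) :=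
    hconv.secant_mono ⟨hx.1.le, hx.2⟩ ⟨ha.1, ha.2.le.trans hx.2⟩ ⟨hb.1, hb.2.le.trans hx.2⟩
      ha.2.ne hb.2.ne hab
  rw [key, key] at h1
  exact h1

/-- The left slopes tend to `ldv f x` as the base point tends to `x` from the left. -/
lemma tendsto_sl (hconv : ConvexOn ℝ (Icc 0 α) f) (hlip : LipschitzOnWith L f (Icc 0 α))
    (hx : x ∈ Ioc 0 α) :
    Tendsto (fun y => (f x - f y) / (x - y)) (𝓝[<] x) (𝓝 (ldv f x)) := by
  set g : ℝ → ℝ := fun y => (f x - f (max y 0)) / (x - max y 0) with hg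
  have hmax : ∀ y ∈ Iio x, max y 0 ∈ Ico (0:ℝ) x := fun y hy =>
    ⟨le_max_right _ _, max_lt hy hx.1⟩
  have hmono : MonotoneOn g (Iio x) := fun a ha b hb hab =>
    sl_mono hconv hx (hmax a ha) (hmax b hb) (max_le_max hab le_rfl)
  have hbdd : BddAbove (g '' Iio x) :=
    ⟨L, by rintro _ ⟨y, hy, rfl⟩; exact sl_le hlip hx (hmax y hy)⟩
  have himg : g '' Iio x = (fun y => (f x - f y) / (x - y)) '' Ico 0 x := by
    have hset : (fun y : ℝ => max y 0) '' Iio x = Ico 0 x := by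
      ext z
      constructor
      · rintro ⟨y, hy, rfl⟩; exact hmax y hy
      · intro hz; exact ⟨z, hz.2, max_eq_left hz.1⟩
    have hcomp : g = (fun y => (f x - f y) / (x - y)) ∘ (fun y : ℝ => max y 0) := rfl
    rw [hcomp, Set.image_comp, hset]
  have ht : Tendsto g (𝓝[<] x) (𝓝 (ldv f x)) := by
    have := hmono.tendsto_nhdsLT hbdd
    rwa [himg] at this
  refine ht.congr' ?_
  filter_upwards [Ioo_mem_nhdsLT_of_mem (show x ∈ Ioc (0:ℝ) x from ⟨hx.1, le_rfl⟩)] with y hy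
  rw [hg]
  simp [max_eq_left hy.1.le]

lemma tendsto_slt (hconv : ConvexOn ℝ (Icc 0 α) f) (hlip : LipschitzOnWith L f (Icc 0 α))
    (hx : x ∈ Ioc 0 α) :
    Tendsto (fun t => (f x - f (x - t)) / t) (𝓝[>] 0) (𝓝 (ldv f x)) := by
  have hm : Tendsto (fun t : ℝ => x - t) (𝓝[>] 0) (𝓝[<] x) := by
    apply tendsto_nhdsWithin_of_tendsto_nhds_of_eventually_within
    · have h0 : Tendsto (fun t : ℝ => x - t) (𝓝 0) (𝓝 x) := by
        simpa using (continuous_sub_left x).tendsto (0:ℝ)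
      exact h0.mono_left nhdsWithin_le_nhds
    · filter_upwards [self_mem_nhdsWithin] with t ht
      exact sub_lt_self x ht
  have := (tendsto_sl hconv hlip hx).comp hm
  simpa [Function.comp_def, sub_sub_cancel] using this

lemma ldv_le_sl (hconv : ConvexOn ℝ (Icc 0 α) f) (hx₁ : x₁ ∈ Ioc 0 α) (hx₂ : x₂ ∈ Ioc 0 α)
    (h12 : x₁ < x₂) : ldv f x₁ ≤ (f x₂ - f x₁) / (x₂ - x₁) := by
  apply csSup_le ((Set.nonempty_Ico.2 hx₁.1).image _)
  rintro _ ⟨y, hy, rfl⟩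
  exact hconv.slope_mono_adjacent ⟨hy.1, hy.2.le.trans hx₁.2⟩ ⟨hx₂.1.le, hx₂.2⟩ hy.2 h12

lemma sl_le_ldv (hlip : LipschitzOnWith L f (Icc 0 α)) (hx₂ : x₂ ∈ Ioc 0 α)
    (hx₁ : x₁ ∈ Ico 0 x₂) : (f x₂ - f x₁) / (x₂ - x₁) ≤ ldv f x₂ :=
  le_csSup (bdd_sl hlip hx₂) ⟨x₁, hx₁, rfl⟩

/-- `ldv f` is left-continuous. -/
lemma tendsto_ldv (hconv : ConvexOn ℝ (Icc 0 α) f) (hlip : LipschitzOnWith L f (Icc 0 α))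
    (hx : x ∈ Ioc 0 α) :
    Tendsto (ldv f) (𝓝[Ioo 0 x] x) (𝓝 (ldv f x)) := by
  refine tendsto_order.2 ⟨fun l hl => ?_, fun m hm => ?_⟩
  · -- lower bound
    obtain ⟨_, ⟨y, hy, rfl⟩, hly⟩ :=
      exists_lt_of_lt_csSup ((Set.nonempty_Ico.2 hx.1).image _) hl
    have hcf : ContinuousWithinAt f (Ioo 0 x) x := by
      have := (hlip.continuousOn).continuousWithinAt (x := x) ⟨hx.1.le, hx.2⟩
      exact this.mono (fun z hz => ⟨hz.1.le, hz.2.le.trans hx.2⟩)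
    have hden : (x : ℝ) - y ≠ 0 := by have := hy.2; intro h; linarith [sub_eq_zero.mp h]
    have hc : Tendsto (fun z => (f z - f y) / (z - y)) (𝓝[Ioo 0 x] x)
        (𝓝 ((f x - f y) / (x - y))) := by
      exact ((hcf.sub tendsto_const_nhds).div
        ((continuous_id.sub continuous_const).continuousWithinAt) hden)
    have hev : ∀ᶠ z in 𝓝[Ioo 0 x] x, l < (f z - f y) / (z - y) :=
      hc.eventually (eventually_gt_nhds hly)
    have hyx : Ioi y ∈ 𝓝[Ioo 0 x] x :=
      mem_nhdsWithin_of_mem_nhds (isOpen_Ioi.mem_nhds hy.2)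
    filter_upwards [hev, hyx, self_mem_nhdsWithin] with z hz1 hz2 hz3
    calc l < (f z - f y) / (z - y) := hz1
      _ ≤ ldv f z := sl_le_ldv hlip ⟨hz3.1, hz3.2.le.trans hx.2⟩ ⟨hy.1, hz2⟩
  · -- upper bound
    filter_upwards [self_mem_nhdsWithin] with z hz
    calc ldv f z ≤ (f x - f z) / (x - z) :=
          ldv_le_sl hconv ⟨hz.1, hz.2.le.trans hx.2⟩ hx hz.2
      _ ≤ ldv f x := sl_le_ldv hlip hx ⟨hz.1.le, hz.2⟩
      _ < m := hm

/-- For `h := y₁ - y₂` with `y₁, y₂` convex Lipschitz on `[0, α]` and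
`ψ(x) := (x, h(x))`, the left derivative `ψ'₋` exists on `(0, α]`, is left-continuous
there, satisfies `‖ψ'₋(x)‖ ≥ 1`, and consequently `ψ` has a left half-tangent at every
point of `(0, α]`. -/
theorem left_derivative_and_left_halftangent_of_DC_graph
    (α : ℝ) (hα : 0 < α) (y₁ y₂ : ℝ → ℝ)
    (hconv₁ : ConvexOn ℝ (Icc 0 α) y₁) (hconv₂ : ConvexOn ℝ (Icc 0 α) y₂)
    (hlip₁ : ∃ L₁ : NNReal, LipschitzOnWith L₁ y₁ (Icc 0 α))
    (hlip₂ : ∃ L₂ : NNReal, LipschitzOnWith L₂ y₂ (Icc 0 α))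
    (ψ : ℝ → EuclideanSpace ℝ (Fin 2))
    (hψ : ∀ x, ψ x = mk2 x (y₁ x - y₂ x)) :
    ∃ D : ℝ → EuclideanSpace ℝ (Fin 2),
      (∀ x ∈ Ioc (0 : ℝ) α,
        Tendsto (fun t : ℝ => t⁻¹ • (ψ x - ψ (x - t))) (𝓝[>] 0) (𝓝 (D x))) ∧
      (∀ x ∈ Ioc (0 : ℝ) α, ContinuousWithinAt D (Iic x) x) ∧
      (∀ x ∈ Ioc (0 : ℝ) α, 1 ≤ ‖D x‖) ∧
      ∀ x ∈ Ioc (0 : ℝ) α, ∃ v : EuclideanSpace ℝ (Fin 2),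
        Tendsto (fun t : ℝ => ‖ψ x - ψ (x - t)‖⁻¹ • (ψ x - ψ (x - t)))
          (𝓝[>] 0) (𝓝 v) := by
  obtain ⟨L₁, hL₁⟩ := hlip₁
  obtain ⟨L₂, hL₂⟩ := hlip₂
  refine ⟨fun z => mk2 1 (ldv y₁ z - ldv y₂ z), ?_, ?_, ?_, ?_⟩
  case refine_1 =>
    intro x hx
    have tq : Tendsto (fun t => (y₁ x - y₁ (x - t)) / t - (y₂ x - y₂ (x - t)) / t)
        (𝓝[>] 0) (𝓝 (ldv y₁ x - ldv y₂ x)) :=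
      (tendsto_slt hconv₁ hL₁ hx).sub (tendsto_slt hconv₂ hL₂ hx)
    have tm := (continuous_mk2_one.tendsto _).comp tq
    refine tm.congr' ?_
    filter_upwards [self_mem_nhdsWithin] with t ht
    have ht0 : (t:ℝ) ≠ 0 := ne_of_gt ht
    rw [Function.comp_apply, hψ, hψ, mk2_sub, mk2_smul]
    have e1 : t⁻¹ * (x - (x - t)) = 1 := by field_simp; ring
    have e2 : t⁻¹ * (y₁ x - y₂ x - (y₁ (x - t) - y₂ (x - t)))
        = (y₁ x - y₁ (x - t)) / t - (y₂ x - y₂ (x - t)) / t := by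
      field_simp
      ring
    rw [e1, e2]
  case refine_2 =>
    intro x hx
    have hIoo : Tendsto (fun z => mk2 1 (ldv y₁ z - ldv y₂ z)) (𝓝[Ioo 0 x] x)
        (𝓝 (mk2 1 (ldv y₁ x - ldv y₂ x))) :=
      (continuous_mk2_one.tendsto _).comp
        ((tendsto_ldv hconv₁ hL₁ hx).sub (tendsto_ldv hconv₂ hL₂ hx))
    have hIio : Tendsto (fun z => mk2 1 (ldv y₁ z - ldv y₂ z)) (𝓝[<] x)
        (𝓝 (mk2 1 (ldv y₁ x - ldv y₂ x))) := by
      rwa [nhdsWithin_Ioo_eq_nhdsLT hx.1] at hIoo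
    have : Tendsto (fun z => mk2 1 (ldv y₁ z - ldv y₂ z)) (𝓝[Iic x] x)
        (𝓝 (mk2 1 (ldv y₁ x - ldv y₂ x))) := by
      rw [← Iio_insert, nhdsWithin_insert, tendsto_sup]
      exact ⟨tendsto_pure_nhds _ _, hIio⟩
    exact this
  case refine_3 =>
    intro x hx
    rw [norm_mk2]
    calc (1:ℝ) = Real.sqrt 1 := Real.sqrt_one.symm
      _ ≤ Real.sqrt (1 ^ 2 + (ldv y₁ x - ldv y₂ x) ^ 2) :=
        Real.sqrt_le_sqrt (by nlinarith [sq_nonneg (ldv y₁ x - ldv y₂ x)])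
  case refine_4 =>
    intro x hx
    set D := fun z => mk2 1 (ldv y₁ z - ldv y₂ z) with hD
    have hnorm : 1 ≤ ‖D x‖ := by
      rw [hD, norm_mk2]
      calc (1:ℝ) = Real.sqrt 1 := Real.sqrt_one.symm
        _ ≤ Real.sqrt (1 ^ 2 + (ldv y₁ x - ldv y₂ x) ^ 2) :=
          Real.sqrt_le_sqrt (by nlinarith [sq_nonneg (ldv y₁ x - ldv y₂ x)])
    have hne : ‖D x‖ ≠ 0 := by intro h; rw [h] at hnorm; norm_num at hnorm
    have h1 : Tendsto (fun t : ℝ => t⁻¹ • (ψ x - ψ (x - t))) (𝓝[>] 0) (𝓝 (D x)) := by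
      have tq : Tendsto (fun t => (y₁ x - y₁ (x - t)) / t - (y₂ x - y₂ (x - t)) / t)
          (𝓝[>] 0) (𝓝 (ldv y₁ x - ldv y₂ x)) :=
        (tendsto_slt hconv₁ hL₁ hx).sub (tendsto_slt hconv₂ hL₂ hx)
      have tm := (continuous_mk2_one.tendsto _).comp tq
      refine tm.congr' ?_
      filter_upwards [self_mem_nhdsWithin] with t ht
      have ht0 : (t:ℝ) ≠ 0 := ne_of_gt ht
      rw [Function.comp_apply, hψ, hψ, mk2_sub, mk2_smul]
      have e1 : t⁻¹ * (x - (x - t)) = 1 := by field_simp; ring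
      have e2 : t⁻¹ * (y₁ x - y₂ x - (y₁ (x - t) - y₂ (x - t)))
          = (y₁ x - y₁ (x - t)) / t - (y₂ x - y₂ (x - t)) / t := by
        field_simp
        ring
      rw [e1, e2]
    have gc : Tendsto (fun w : EuclideanSpace ℝ (Fin 2) => ‖w‖⁻¹ • w) (𝓝 (D x))
        (𝓝 (‖D x‖⁻¹ • D x)) := by
      have : ContinuousAt (fun w : EuclideanSpace ℝ (Fin 2) => ‖w‖⁻¹ • w) (D x) :=
        (continuous_norm.continuousAt.inv₀ hne).smul continuousAt_id
      exact this
    refine ⟨‖D x‖⁻¹ • D x, (gc.comp h1).congr' ?_⟩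
    filter_upwards [self_mem_nhdsWithin] with t ht
    have ht0 : (t:ℝ) ≠ 0 := ne_of_gt ht
    set w := ψ x - ψ (x - t) with hw
    rw [Function.comp_apply, norm_smul, Real.norm_eq_abs, abs_of_pos (inv_pos.2 ht),
      smul_smul, mul_inv, inv_inv]
    congr 1
    rw [mul_comm t _, mul_assoc, mul_inv_cancel₀ ht0, mul_one]
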